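/- Existence and uniqueness of the Peierls constant: let M be a nonempty compact metric space and A : M × M → ℝ a cost. Define the iterated costs by A¹ = A and A^{n+1}(y,x) = min_{z ∈ M} (Aⁿ(y,z) + A(z,x)). Then there exists a unique real number α such that for every (y,x) ∈ M × M the sequence n ↦ Aⁿ(y,x) + n·α is bounded below and does not tend to +∞ (equivalently, its inferior limit is a real number). -/

import Mathlib

/-- The iterated costs: `iterCost A n = A^(n+1)`, where `A¹ = A` and
`A^(n+1)(y, x) = inf_{z ∈ M} (Aⁿ(y, z) + A(z, x))`. -/
noncomputable def iterCost {M : Type*} [MetricSpace M] [CompactSpace M] [Nonempty M]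
    (A : M × M → ℝ) : ℕ → M × M → ℝ
  | 0 => A
  | n + 1 => fun p => ⨅ z : M, (iterCost A n (p.1, z) + A (z, p.2))

open Filter

section Aux
set_option linter.unusedSectionVars false
variable {M : Type*} [MetricSpace M] [CompactSpace M] [Nonempty M]

lemma iterCost_succ (A : M × M → ℝ) (n : ℕ) (p : M × M) :
    iterCost A (n+1) p = ⨅ z : M, (iterCost A n (p.1, z) + A (z, p.2)) := rfl

lemma iter_lower (A : M × M → ℝ) {m : ℝ} (hm : ∀ p, m ≤ A p) :
    ∀ (n : ℕ) (p : M × M), ((n:ℝ)+1) * m ≤ iterCost A n p := by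
  intro n
  induction n with
  | zero => intro p; simpa [show iterCost A 0 p = A p from rfl] using hm p
  | succ n ih =>
    intro p
    rw [iterCost_succ]
    apply le_ciInf
    intro z
    have h1 := ih (p.1, z)
    have h2 := hm (z, p.2)
    push_cast
    nlinarith

lemma iter_upper (A : M × M → ℝ) {m M₀ : ℝ} (hm : ∀ p, m ≤ A p) (hM : ∀ p, A p ≤ M₀) :
    ∀ (n : ℕ) (p : M × M), iterCost A n p ≤ ((n:ℝ)+1) * M₀ := by
  intro n
  induction n with
  | zero => intro p; simpa [show iterCost A 0 p = A p from rfl] using hM p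
  | succ n ih =>
    intro p
    rw [iterCost_succ]
    have hbb : BddBelow (Set.range fun z => iterCost A n (p.1, z) + A (z, p.2)) := by
      refine ⟨((n:ℝ)+1)*m + m, ?_⟩
      rintro _ ⟨z, rfl⟩
      exact add_le_add (iter_lower A hm n _) (hm _)
    have := ciInf_le hbb (Classical.arbitrary M)
    have h1 := ih (p.1, Classical.arbitrary M)
    have h2 := hM (Classical.arbitrary M, p.2)
    push_cast
    nlinarith

lemma iter_bddBelow (A : M × M → ℝ) {m : ℝ} (hm : ∀ p, m ≤ A p) (n : ℕ) (y x : M) :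
    BddBelow (Set.range fun z => iterCost A n (y, z) + A (z, x)) := by
  refine ⟨((n:ℝ)+1)*m + m, ?_⟩
  rintro _ ⟨z, rfl⟩
  exact add_le_add (iter_lower A hm n _) (hm _)

end Aux

section Main
variable {M : Type*} [MetricSpace M] [CompactSpace M] [Nonempty M]

/-- `A^{a+b}(y,x) ≤ A^a(y,z) + A^b(z,x)`. -/
lemma iter_le_comp (A : M × M → ℝ) {m : ℝ} (hm : ∀ p, m ≤ A p) :
    ∀ (b a : ℕ) (y z x : M),
      iterCost A (a+b+1) (y, x) ≤ iterCost A a (y, z) + iterCost A b (z, x) := by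
  intro b
  induction b with
  | zero =>
    intro a y z x
    rw [show a + 0 + 1 = a + 1 from rfl, iterCost_succ]
    exact ciInf_le (iter_bddBelow A hm a y x) z
  | succ b ih =>
    intro a y z x
    rw [show a + (b+1) + 1 = (a+b+1) + 1 by omega, iterCost_succ]
    rw [show iterCost A (b+1) (z, x) = ⨅ w : M, (iterCost A b (z, w) + A (w, x)) from rfl]
    rw [← sub_le_iff_le_add']
    apply le_ciInf
    intro w
    have h1 : (⨅ w : M, (iterCost A (a+b+1) ((y,x).1, w) + A (w, (y,x).2)))
        ≤ iterCost A (a+b+1) (y, w) + A (w, x) := ciInf_le (iter_bddBelow A hm _ y x) w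
    have h2 := ih a y z w
    simp only at h1
    linarith

/-- `(inf A^a) + inf_w A^b(w,x) ≤ A^{a+b}(y,x)`. -/
lemma comp_le_iter (A : M × M → ℝ) {m : ℝ} (hm : ∀ p, m ≤ A p) :
    ∀ (b a : ℕ) (y x : M),
      (⨅ p : M × M, iterCost A a p) + (⨅ w : M, iterCost A b (w, x))
        ≤ iterCost A (a+b+1) (y, x) := by
  have hbbp : ∀ (n : ℕ), BddBelow (Set.range (iterCost A n)) := fun n =>
    ⟨((n:ℝ)+1)*m, by rintro _ ⟨q, rfl⟩; exact iter_lower A hm n q⟩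
  have hbbw : ∀ (n : ℕ) (x : M), BddBelow (Set.range fun w => iterCost A n (w, x)) := fun n x =>
    ⟨((n:ℝ)+1)*m, by rintro _ ⟨w, rfl⟩; exact iter_lower A hm n _⟩
  intro b
  induction b with
  | zero =>
    intro a y x
    rw [show a + 0 + 1 = a + 1 from rfl, iterCost_succ]
    apply le_ciInf
    intro z
    exact add_le_add (ciInf_le (hbbp a) _) (ciInf_le (hbbw 0 x) z)
  | succ b ih =>
    intro a y x
    rw [show a + (b+1) + 1 = (a+b+1) + 1 by omega, iterCost_succ]
    apply le_ciInf
    intro z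
    have hIH := ih a y z
    -- key: ⨅ w, iterCost A (b+1) (w,x) ≤ (⨅ w, iterCost A b (w,z)) + A (z,x)
    have key : (⨅ w : M, iterCost A (b+1) (w, x))
        ≤ (⨅ w : M, iterCost A b (w, z)) + A (z, x) := by
      rw [← sub_le_iff_le_add]
      apply le_ciInf
      intro w
      have h1 : (⨅ w' : M, iterCost A (b+1) (w', x)) ≤ iterCost A (b+1) (w, x) :=
        ciInf_le (hbbw (b+1) x) w
      have h2 : iterCost A (b+1) (w, x) ≤ iterCost A b (w, z) + A (z, x) := by
        have := iter_le_comp A hm 0 b w z x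
        simpa [show iterCost A 0 (z, x) = A (z, x) from rfl] using this
      linarith
    simp only at hIH ⊢
    linarith

end Main

/-- Existence and uniqueness of the Peierls constant: there is a unique `α ∈ ℝ` such
that for every `(y, x)` the sequence `n ↦ Aⁿ(y, x) + n α` is bounded below and does
not tend to `+∞`. -/
theorem peierls_constant_exists_unique
    {M : Type*} [MetricSpace M] [CompactSpace M] [Nonempty M]
    (A : M × M → ℝ) (hA : Continuous A) :
    ∃! α : ℝ, ∀ p : M × M,
      BddBelow (Set.range fun n : ℕ => iterCost A n p + (n + 1 : ℝ) * α) ∧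
      ¬ Filter.Tendsto (fun n : ℕ => iterCost A n p + (n + 1 : ℝ) * α)
        Filter.atTop Filter.atTop := by
  -- bounds on A
  obtain ⟨m, hm'⟩ := (isCompact_range hA).bddBelow
  obtain ⟨M₀, hM'⟩ := (isCompact_range hA).bddAbove
  have hm : ∀ p, m ≤ A p := fun p => hm' ⟨p, rfl⟩
  have hM : ∀ p, A p ≤ M₀ := fun p => hM' ⟨p, rfl⟩
  set c : ℕ → ℝ := fun n => ⨅ p : M × M, iterCost A n p with hc
  set bs : ℕ → ℝ := fun n => ⨆ p : M × M, iterCost A n p with hbs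
  have hbbp : ∀ n : ℕ, BddBelow (Set.range (iterCost A n)) := fun n =>
    ⟨((n:ℝ)+1)*m, by rintro _ ⟨q, rfl⟩; exact iter_lower A hm n q⟩
  have hbap : ∀ n : ℕ, BddAbove (Set.range (iterCost A n)) := fun n =>
    ⟨((n:ℝ)+1)*M₀, by rintro _ ⟨q, rfl⟩; exact iter_upper A hm hM n q⟩
  have c_le : ∀ (n : ℕ) (p : M × M), c n ≤ iterCost A n p := fun n p =>
    ciInf_le (hbbp n) p
  have le_bs : ∀ (n : ℕ) (p : M × M), iterCost A n p ≤ bs n := fun n p =>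
    le_ciSup (hbap n) p
  -- superadditivity of c
  have superadd : ∀ a b : ℕ, c a + c b ≤ c (a+b+1) := by
    intro a b
    apply le_ciInf
    rintro ⟨y, x⟩
    have h1 := comp_le_iter A hm b a y x
    have h2 : c b ≤ ⨅ w : M, iterCost A b (w, x) :=
      le_ciInf fun w => c_le b (w, x)
    have h3 : c a ≤ ⨅ p : M × M, iterCost A a p := le_refl _
    linarith
  -- subadditivity of bs
  have subadd : ∀ a b : ℕ, bs (a+b+1) ≤ bs a + bs b := by
    intro a b
    apply ciSup_le
    rintro ⟨y, x⟩
    have h1 := iter_le_comp A hm b a y (Classical.arbitrary M) x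
    have h2 := le_bs a (y, Classical.arbitrary M)
    have h3 := le_bs b (Classical.arbitrary M, x)
    linarith
  -- upper bound of bs by c
  have U : ∀ n : ℕ, bs (n+2) ≤ c n + 2*M₀ := by
    intro n
    apply ciSup_le
    rintro ⟨y, x⟩
    have key : iterCost A (n+2) (y, x) - 2*M₀ ≤ c n := by
      apply le_ciInf
      rintro ⟨z, w⟩
      have h1 : iterCost A (n+2) (y, x) ≤ A (y, z) + iterCost A (n+1) (z, x) := by
        have := iter_le_comp A hm (n+1) 0 y z x
        rw [show 0 + (n+1) + 1 = n + 2 by omega] at this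
        exact this
      have h2 : iterCost A (n+1) (z, x) ≤ iterCost A n (z, w) + A (w, x) := by
        have := iter_le_comp A hm 0 n z w x
        rw [show n + 0 + 1 = n + 1 by omega] at this
        exact this
      have h3 := hM (y, z)
      have h4 := hM (w, x)
      linarith
    linarith
  -- repeated superadditivity
  have crep : ∀ k n : ℕ, ((k:ℝ)+1) * c n ≤ c (k*(n+1)+n) := by
    intro k n
    induction k with
    | zero => simp
    | succ k ih =>
      have e : (k+1)*(n+1)+n = (k*(n+1)+n) + n + 1 := by ring
      rw [e]
      have h1 := superadd (k*(n+1)+n) n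
      have e2 : (((k+1:ℕ)):ℝ) + 1 = ((k:ℝ)+1) + 1 := by push_cast; ring
      rw [e2]
      nlinarith
  have brep : ∀ k n : ℕ, bs (k*(n+1)+n) ≤ ((k:ℝ)+1) * bs n := by
    intro k n
    induction k with
    | zero => simp
    | succ k ih =>
      have e : (k+1)*(n+1)+n = (k*(n+1)+n) + n + 1 := by ring
      rw [e]
      have h1 := subadd (k*(n+1)+n) n
      have e2 : (((k+1:ℕ)):ℝ) + 1 = ((k:ℝ)+1) + 1 := by push_cast; ring
      rw [e2]
      nlinarith
  have c_le_bs : ∀ n : ℕ, c n ≤ bs n := fun n =>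
    le_trans (c_le n (Classical.arbitrary _)) (le_bs n _)
  -- the cross inequality
  have cross : ∀ n k : ℕ, c n / ((n:ℝ)+1) ≤ bs k / ((k:ℝ)+1) := by
    intro n k
    have hn : (0:ℝ) < (n:ℝ)+1 := by positivity
    have hk : (0:ℝ) < (k:ℝ)+1 := by positivity
    rw [div_le_div_iff₀ hn hk]
    have h1 := crep k n
    have h2 := brep n k
    rw [show n*(k+1)+k = k*(n+1)+n by ring] at h2
    have h3 := c_le_bs (k*(n+1)+n)
    nlinarith
  -- the critical value
  set σ : ℝ := ⨆ n : ℕ, c n / ((n:ℝ)+1) with hσ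
  set β : ℝ := ⨅ n : ℕ, bs n / ((n:ℝ)+1) with hβ
  have hba : BddAbove (Set.range fun n : ℕ => c n / ((n:ℝ)+1)) :=
    ⟨bs 0 / 1, by rintro _ ⟨n, rfl⟩; simpa using cross n 0⟩
  have hbb : BddBelow (Set.range fun n : ℕ => bs n / ((n:ℝ)+1)) :=
    ⟨c 0 / 1, by rintro _ ⟨n, rfl⟩; simpa using cross 0 n⟩
  have σ_le_β : σ ≤ β :=
    ciSup_le fun n => le_ciInf fun k => cross n k
  have c_le_σ : ∀ n : ℕ, c n ≤ ((n:ℝ)+1) * σ := by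
    intro n
    have h := le_ciSup hba n
    have hn : (0:ℝ) < (n:ℝ)+1 := by positivity
    rw [div_le_iff₀ hn] at h
    linarith [h]
  have β_le_bs : ∀ n : ℕ, ((n:ℝ)+1) * β ≤ bs n := by
    intro n
    have h := ciInf_le hbb n
    have hn : (0:ℝ) < (n:ℝ)+1 := by positivity
    rw [le_div_iff₀ hn] at h
    linarith [h]
  -- uniform lower bound
  have lowerC : ∀ n : ℕ, ((n:ℝ)+1) * σ + (2*β - 2*M₀) ≤ c n := by
    intro n
    have h1 := U n
    have h2 := β_le_bs (n+2)
    have e : (((n+2:ℕ)):ℝ) + 1 = ((n:ℝ)+1) + 2 := by push_cast; ring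
    rw [e] at h2
    have h3 : ((n:ℝ)+1) * σ ≤ ((n:ℝ)+1) * β := by
      have : (0:ℝ) ≤ (n:ℝ)+1 := by positivity
      nlinarith
    nlinarith
  -- uniform two-sided bounds on the normalized sequence
  have lower : ∀ (n : ℕ) (p : M × M),
      2*β - 2*M₀ ≤ iterCost A n p + ((n:ℝ)+1) * (-σ) := by
    intro n p
    have h1 := lowerC n
    have h2 := c_le n p
    linarith
  have upper : ∀ (n : ℕ) (p : M × M),
      iterCost A n p + ((n:ℝ)+1) * (-σ) ≤ 2*|M₀| + 2*|σ| := by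
    intro n p
    match n with
    | 0 =>
      have h1 := hM p
      have h2 : -σ ≤ |σ| := neg_le_abs σ
      have h3 : M₀ ≤ |M₀| := le_abs_self M₀
      have h4 : (0:ℝ) ≤ |M₀| := abs_nonneg _
      have h5 : (0:ℝ) ≤ |σ| := abs_nonneg _
      have : iterCost A 0 p = A p := rfl
      rw [this]
      push_cast
      linarith
    | 1 =>
      have h1 := iter_upper A hm hM 1 p
      have h2 : -σ ≤ |σ| := neg_le_abs σ
      have h3 : M₀ ≤ |M₀| := le_abs_self M₀
      have h4' : (0:ℝ) ≤ |M₀| := abs_nonneg _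
      have h5' : (0:ℝ) ≤ |σ| := abs_nonneg _
      push_cast at h1 ⊢
      nlinarith
    | (k+2) =>
      have h1 := le_bs (k+2) p
      have h2 := U k
      have h3 := c_le_σ k
      have h4 : -σ ≤ |σ| := neg_le_abs σ
      have h5 : M₀ ≤ |M₀| := le_abs_self M₀
      have h6 : σ ≤ |σ| := le_abs_self σ
      have e : (((k+2:ℕ)):ℝ) + 1 = ((k:ℝ)+1) + 2 := by push_cast; ring
      rw [e]
      nlinarith
  -- the main property for α = -σ
  have main : ∀ p : M × M,
      BddBelow (Set.range fun n : ℕ => iterCost A n p + (n + 1 : ℝ) * (-σ)) ∧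
      ¬ Filter.Tendsto (fun n : ℕ => iterCost A n p + (n + 1 : ℝ) * (-σ))
        Filter.atTop Filter.atTop := by
    intro p
    constructor
    · exact ⟨2*β - 2*M₀, by rintro _ ⟨n, rfl⟩; exact lower n p⟩
    · intro h
      obtain ⟨n, hn⟩ := (tendsto_atTop.mp h (2*|M₀| + 2*|σ| + 1)).exists
      have := upper n p
      linarith
  refine ⟨-σ, main, ?_⟩
  -- uniqueness
  intro α' h'
  set p0 : M × M := (Classical.arbitrary M, Classical.arbitrary M) with hp0
  obtain ⟨hb', hnt'⟩ := h' p0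
  obtain ⟨hb0, hnt0⟩ := main p0
  by_contra hne
  rcases lt_or_gt_of_ne hne with hlt | hgt
  · -- α' < -σ : contradicts BddBelow for α'
    set δ : ℝ := -σ - α' with hδ
    have hδpos : 0 < δ := by simp only [hδ]; linarith
    obtain ⟨L, hL⟩ := hb'
    rw [tendsto_atTop] at hnt0
    push_neg at hnt0
    obtain ⟨B, hB⟩ := hnt0
    obtain ⟨N, hN⟩ := exists_nat_gt ((B - L)/δ)
    obtain ⟨n, hnN, hgn⟩ := (frequently_atTop.mp hB) N
    have h1 : L ≤ iterCost A n p0 + ((n:ℝ) + 1) * α' := hL ⟨n, rfl⟩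
    have h2 : (B - L)/δ < (n:ℝ) := lt_of_lt_of_le hN (by exact_mod_cast hnN)
    have h3 : B - L < (n:ℝ) * δ := (div_lt_iff₀ hδpos).mp h2
    have e : iterCost A n p0 + ((n:ℝ)+1) * α'
        = (iterCost A n p0 + ((n:ℝ)+1) * (-σ)) - ((n:ℝ)+1) * δ := by
      simp only [hδ]; ring
    have h4 : (n:ℝ) * δ ≤ ((n:ℝ)+1) * δ := by nlinarith
    linarith
  · -- α' > -σ : the sequence for α' tends to atTop
    apply hnt'
    set δ : ℝ := α' + σ with hδ
    have hδpos : 0 < δ := by simp only [hδ]; linarith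
    obtain ⟨L, hL⟩ := hb0
    rw [tendsto_atTop]
    intro B
    obtain ⟨N, hN⟩ := exists_nat_gt ((B - L)/δ)
    filter_upwards [eventually_ge_atTop N] with n hn
    have h1 : L ≤ iterCost A n p0 + ((n:ℝ) + 1) * (-σ) := hL ⟨n, rfl⟩
    have h2 : (B - L)/δ < (n:ℝ) := lt_of_lt_of_le hN (by exact_mod_cast hn)
    have h3 : B - L < (n:ℝ) * δ := (div_lt_iff₀ hδpos).mp h2
    have e : iterCost A n p0 + ((n:ℝ)+1) * α'
        = (iterCost A n p0 + ((n:ℝ)+1) * (-σ)) + ((n:ℝ)+1) * δ := by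
      simp only [hδ]; ring
    have h4 : (n:ℝ) * δ ≤ ((n:ℝ)+1) * δ := by nlinarith
    linarith
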